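/- Let H be a complex Hilbert space, (f_n)_{n∈ℕ} a frame for H, and let (m_k)_{k∈ℕ} and (n_k)_{k∈ℕ} be two strictly increasing sequences of natural numbers whose ranges have union ℕ. If the intersection of the closed linear span of (f_{m_k})_k with the closed linear span of (f_{n_k})_k is finite-dimensional, then (f_{m_k})_k and (f_{n_k})_k are both frame sequences, i.e. each is a frame for the closure of its own linear span. -/

import Mathlib

set_option maxHeartbeats 1000000

open scoped InnerProductSpace
open Function

noncomputable section FrameAux

local notation "ℓ²" => lp (fun _ : ℕ => ℂ) 2

lemma lp2_norm_sq (c : ℓ²) : ‖c‖ ^ 2 = ∑' k, ‖c k‖ ^ 2 := by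
  have h := lp.norm_rpow_eq_tsum (p := 2) (by norm_num) c
  have h2 : ((2 : ENNReal).toReal) = (2 : ℝ) := by norm_num
  rw [h2] at h
  calc ‖c‖ ^ 2 = ‖c‖ ^ (2:ℝ) := by
        rw [← Real.rpow_natCast ‖c‖ 2]; norm_num
    _ = ∑' k, ‖c k‖ ^ (2:ℝ) := h
    _ = ∑' k, ‖c k‖ ^ 2 := by
        refine tsum_congr fun k => ?_
        rw [← Real.rpow_natCast ‖c k‖ 2]; norm_num

lemma mem_lp2 {c : ℕ → ℂ} (h : Summable fun k => ‖c k‖ ^ 2) : Memℓp c 2 := by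
  apply memℓp_gen
  have h2 : ((2 : ENNReal).toReal) = (2 : ℝ) := by norm_num
  rw [h2]
  convert h using 1
  funext k
  rw [← Real.rpow_natCast ‖c k‖ 2]; norm_num

lemma tsum_CS {a b : ℕ → ℝ} (ha : ∀ k, 0 ≤ a k) (hb : ∀ k, 0 ≤ b k)
    (sa : Summable fun k => a k ^ 2) (sb : Summable fun k => b k ^ 2) :
    Summable (fun k => a k * b k) ∧
      ∑' k, a k * b k ≤ Real.sqrt (∑' k, a k ^ 2) * Real.sqrt (∑' k, b k ^ 2) := by
  have hsum : Summable (fun k => a k * b k) := by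
    refine Summable.of_nonneg_of_le (fun k => mul_nonneg (ha k) (hb k))
      (fun k => ?_) ((sa.add sb).div_const 2)
    have := two_mul_le_add_sq (a k) (b k)
    nlinarith
  refine ⟨hsum, Summable.tsum_le_of_sum_le hsum fun s => ?_⟩
  have hCS := Finset.sum_mul_sq_le_sq_mul_sq s a b
  have h1 : ∑ k ∈ s, a k ^ 2 ≤ ∑' k, a k ^ 2 := Summable.sum_le_tsum s (fun k _ => sq_nonneg _) sa
  have h2 : ∑ k ∈ s, b k ^ 2 ≤ ∑' k, b k ^ 2 := Summable.sum_le_tsum s (fun k _ => sq_nonneg _) sb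
  have hs1 : (0:ℝ) ≤ ∑ k ∈ s, a k ^ 2 := Finset.sum_nonneg fun k _ => sq_nonneg _
  have hs2 : (0:ℝ) ≤ ∑ k ∈ s, b k ^ 2 := Finset.sum_nonneg fun k _ => sq_nonneg _
  have hab : (0:ℝ) ≤ ∑ k ∈ s, a k * b k :=
    Finset.sum_nonneg fun k _ => mul_nonneg (ha k) (hb k)
  calc ∑ k ∈ s, a k * b k
      = Real.sqrt ((∑ k ∈ s, a k * b k) ^ 2) := (Real.sqrt_sq hab).symm
    _ ≤ Real.sqrt ((∑ k ∈ s, a k ^ 2) * (∑ k ∈ s, b k ^ 2)) := Real.sqrt_le_sqrt hCS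
    _ ≤ Real.sqrt ((∑' k, a k ^ 2) * (∑' k, b k ^ 2)) := by
        apply Real.sqrt_le_sqrt; apply mul_le_mul h1 h2 hs2 (le_trans hs1 h1)
    _ = Real.sqrt (∑' k, a k ^ 2) * Real.sqrt (∑' k, b k ^ 2) := by
        rw [Real.sqrt_mul (le_trans hs1 h1)]

lemma lp2_summable_sq (c : ℓ²) : Summable fun k => ‖c k‖ ^ 2 := by
  have h := lp.memℓp c
  rw [memℓp_gen_iff (by norm_num : (0:ℝ) < (2 : ENNReal).toReal)] at h
  have h2 : ((2 : ENNReal).toReal) = (2 : ℝ) := by norm_num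
  rw [h2] at h
  convert h using 1
  funext k
  rw [← Real.rpow_natCast ‖c k‖ 2]; norm_num

lemma range_eq_top_of_dense_of_fincodim
    {X Y : Type*} [NormedAddCommGroup X] [InnerProductSpace ℂ X] [CompleteSpace X]
    [NormedAddCommGroup Y] [NormedSpace ℂ Y] [CompleteSpace Y]
    (T : X →L[ℂ] Y) (V : Submodule ℂ Y) [FiniteDimensional ℂ V]
    (hd : Dense (LinearMap.range (T : X →ₗ[ℂ] Y) : Set Y))
    (hsup : LinearMap.range (T : X →ₗ[ℂ] Y) ⊔ V = ⊤) :
    LinearMap.range (T : X →ₗ[ℂ] Y) = ⊤ := by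
  classical
  set p : Submodule ℂ Y := LinearMap.range (T : X →ₗ[ℂ] Y) with hp
  -- complement of p ⊓ V inside V
  obtain ⟨W, hW⟩ := Submodule.exists_isCompl ((p ⊓ V).comap V.subtype)
  set F : Submodule ℂ Y := W.map V.subtype with hF
  have hFV : F ≤ V := by
    rw [hF]; rintro y ⟨w, _, rfl⟩; exact (w : V).2
  haveI : FiniteDimensional ℂ F := by
    have : FiniteDimensional ℂ W := inferInstance
    exact Module.Finite.map _ _
  haveI : CompleteSpace F := FiniteDimensional.complete ℂ F
  have hpF_inf : p ⊓ F = ⊥ := by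
    rw [Submodule.eq_bot_iff]
    rintro y ⟨hyp, hyF⟩
    obtain ⟨w, hwW, rfl⟩ := hyF
    have hmem : w ∈ ((p ⊓ V).comap V.subtype) := by
      simp only [Submodule.mem_comap]
      exact ⟨hyp, (w : V).2⟩
    have : w ∈ ((p ⊓ V).comap V.subtype) ⊓ W := ⟨hmem, hwW⟩
    rw [hW.inf_eq_bot] at this
    have hw0 : w = 0 := (Submodule.mem_bot ℂ).1 this
    rw [hw0]
    simp
  have hpF_sup : p ⊔ F = ⊤ := by
    rw [← top_le_iff]
    intro y _
    have hy : y ∈ p ⊔ V := hsup ▸ Submodule.mem_top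
    obtain ⟨a, ha, b, hb, rfl⟩ := Submodule.mem_sup.1 hy
    -- decompose b ∈ V using the complement
    have hbW : (⟨b, hb⟩ : V) ∈ ((p ⊓ V).comap V.subtype) ⊔ W := by
      rw [hW.sup_eq_top]; trivial
    obtain ⟨u, hu, w, hw, huw⟩ := Submodule.mem_sup.1 hbW
    have hb_eq : b = (u : Y) + ((w : V) : Y) := by
      have := congrArg (V.subtype) huw
      simpa using this.symm
    have hu_p : (u : Y) ∈ p := (Submodule.mem_comap.1 hu).1
    refine Submodule.mem_sup.2 ⟨a + (u : Y), p.add_mem ha hu_p, ((w : V) : Y),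
      ⟨w, hw, rfl⟩, by rw [hb_eq]; exact add_assoc _ _ _⟩
  -- kernel and its orthogonal complement
  set K : Submodule ℂ X := (LinearMap.ker (T : X →ₗ[ℂ] Y))ᗮ with hK
  haveI : CompleteSpace K := (Submodule.isClosed_orthogonal _).completeSpace_coe
  set Φ : (K × F) →L[ℂ] Y := (T.comp (Submodule.subtypeL K)).coprod (Submodule.subtypeL F)
    with hΦ
  have hΦ_apply : ∀ (x : K) (v : F), Φ (x, v) = T x + v := fun x v => rfl
  have hker : LinearMap.ker (Φ : (K × F) →ₗ[ℂ] Y) = ⊥ := by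
    rw [Submodule.eq_bot_iff]
    rintro ⟨x, v⟩ hxv
    have h0 : T x + (v : Y) = 0 := hxv
    have hvp : -(v : Y) ∈ p := ⟨(x : X), by rw [eq_neg_iff_add_eq_zero]; exact h0⟩
    have hvF : -(v : Y) ∈ F := F.neg_mem v.2
    have hv0 : -(v : Y) ∈ p ⊓ F := ⟨hvp, hvF⟩
    rw [hpF_inf] at hv0
    have hv : (v : Y) = 0 := by simpa [neg_eq_zero] using hv0
    have hTx : T x = 0 := by rw [hv, add_zero] at h0; exact h0
    have hxker : (x : X) ∈ LinearMap.ker (T : X →ₗ[ℂ] Y) ⊓ (LinearMap.ker (T : X →ₗ[ℂ] Y))ᗮ :=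
      ⟨hTx, x.2⟩
    rw [Submodule.inf_orthogonal_eq_bot] at hxker
    have : (x : X) = 0 := hxker
    simp only [Prod.mk_eq_zero]
    exact ⟨Subtype.ext this, Subtype.ext hv⟩
  haveI : CompleteSpace (LinearMap.ker (T : X →ₗ[ℂ] Y)) :=
    (ContinuousLinearMap.isClosed_ker T).completeSpace_coe
  haveI : Submodule.HasOrthogonalProjection (LinearMap.ker (T : X →ₗ[ℂ] Y)) :=
    Submodule.HasOrthogonalProjection.ofCompleteSpace _
  have hrange : LinearMap.range (Φ : (K × F) →ₗ[ℂ] Y) = ⊤ := by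
    rw [← top_le_iff]
    intro y _
    have hy : y ∈ p ⊔ F := hpF_sup ▸ Submodule.mem_top
    obtain ⟨a, ⟨x, rfl⟩, b, hb, rfl⟩ := Submodule.mem_sup.1 hy
    obtain ⟨u, hu, k, hk, hx⟩ := (LinearMap.ker (T : X →ₗ[ℂ] Y)).exists_add_mem_mem_orthogonal x
    refine ⟨(⟨k, hk⟩, ⟨b, hb⟩), ?_⟩
    rw [ContinuousLinearMap.coe_coe, ContinuousLinearMap.coe_coe, hΦ_apply]
    congr 1
    rw [hx, map_add]
    have : T u = 0 := hu
    simp [this]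
  set e := ContinuousLinearEquiv.ofBijective Φ hker hrange with he
  set π : Y →L[ℂ] F :=
    (ContinuousLinearMap.snd ℂ K F).comp (e.symm : Y →L[ℂ] K × F) with hπ
  have hset : (p : Set Y) = π ⁻¹' {0} := by
    ext y
    simp only [Set.mem_preimage, Set.mem_singleton_iff, SetLike.mem_coe]
    constructor
    · rintro ⟨x, rfl⟩
      obtain ⟨u, hu, k, hk, hx⟩ := (LinearMap.ker (T : X →ₗ[ℂ] Y)).exists_add_mem_mem_orthogonal x
      have h1 : T x = Φ (⟨k, hk⟩, 0) := by
        rw [hΦ_apply]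
        rw [hx, map_add]
        have : T u = 0 := hu
        simp [this]
      have h2 : e.symm (T x) = (⟨k, hk⟩, 0) := by
        rw [h1]
        exact e.symm_apply_apply _
      rw [hπ]
      simp only [ContinuousLinearMap.coe_comp', Function.comp_apply,
        ContinuousLinearEquiv.coe_coe, ContinuousLinearMap.coe_coe, h2]
      rfl
    · intro hy
      have h1 : y = Φ (e.symm y) := (e.apply_symm_apply y).symm
      have h2 : Φ (e.symm y) = T ((e.symm y).1 : X) + ((e.symm y).2 : Y) := rfl
      have h3 : ((e.symm y).2 : Y) = 0 := by
        have : (e.symm y).2 = π y := rfl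
        rw [this, hy]
        rfl
      have h4 : T ((e.symm y).1 : X) + ((e.symm y).2 : Y) = y := by
        rw [← h2, ← h1]
      rw [h3, add_zero] at h4
      exact ⟨(e.symm y).1, h4⟩
  have hclosed : IsClosed (p : Set Y) := by
    rw [hset]
    exact isClosed_singleton.preimage π.continuous
  have : (p : Set Y) = Set.univ := by
    rw [← hclosed.closure_eq]
    exact hd.closure_eq
  rw [← top_le_iff]
  intro y _
  show y ∈ p
  rw [← SetLike.mem_coe, this]
  trivial

variable {H : Type*} [NormedAddCommGroup H] [InnerProductSpace ℂ H] [CompleteSpace H]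

lemma sq_le_of_nonneg {x y : ℝ} (hx : 0 ≤ x) (hy : 0 ≤ y) (h : x ^ 2 ≤ y ^ 2) : x ≤ y := by
  nlinarith

lemma bessel_finsum (g : ℕ → H) (B' : ℝ) (hB'nn : 0 ≤ B')
    (hsum : ∀ x : H, Summable fun j => ‖⟪x, g j⟫_ℂ‖ ^ 2)
    (hup : ∀ x : H, ∑' j, ‖⟪x, g j⟫_ℂ‖ ^ 2 ≤ B' * ‖x‖ ^ 2)
    (s : Finset ℕ) (c : ℕ → ℂ) :
    ‖∑ j ∈ s, c j • g j‖ ^ 2 ≤ B' * ∑ j ∈ s, ‖c j‖ ^ 2 := by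
  set v := ∑ j ∈ s, c j • g j with hv
  have hB' : 0 ≤ B' * ‖v‖ ^ 2 := le_trans (tsum_nonneg (fun j => sq_nonneg _)) (hup v)
  have hinner : ⟪v, v⟫_ℂ = ∑ j ∈ s, c j * ⟪v, g j⟫_ℂ := by
    rw [hv]
    rw [inner_sum]
    exact Finset.sum_congr rfl fun j _ => inner_smul_right _ _ _
  have hnv : ‖v‖ ^ 2 = ‖⟪v, v⟫_ℂ‖ := by
    rw [inner_self_eq_norm_sq_to_K (𝕜 := ℂ)]
    rw [norm_pow]
    simp
  have h1 : ‖v‖ ^ 2 ≤ ∑ j ∈ s, ‖c j‖ * ‖⟪v, g j⟫_ℂ‖ := by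
    rw [hnv, hinner]
    refine le_trans (norm_sum_le _ _) ?_
    exact le_of_eq (Finset.sum_congr rfl fun j _ => norm_mul _ _)
  have hCS := Finset.sum_mul_sq_le_sq_mul_sq s (fun j => ‖c j‖) (fun j => ‖⟪v, g j⟫_ℂ‖)
  have h2 : ∑ j ∈ s, ‖⟪v, g j⟫_ℂ‖ ^ 2 ≤ B' * ‖v‖ ^ 2 :=
    le_trans (Summable.sum_le_tsum s (fun j _ => sq_nonneg _) (hsum v)) (hup v)
  -- ‖v‖^2 ≤ sqrt(Σ‖c‖²) * sqrt(B') * ‖v‖, then conclude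
  have hc : (0:ℝ) ≤ ∑ j ∈ s, ‖c j‖ ^ 2 := Finset.sum_nonneg fun j _ => sq_nonneg _
  have key : (‖v‖ ^ 2) ^ 2 ≤ (∑ j ∈ s, ‖c j‖ ^ 2) * (B' * ‖v‖ ^ 2) := by
    calc (‖v‖ ^ 2) ^ 2 ≤ (∑ j ∈ s, ‖c j‖ * ‖⟪v, g j⟫_ℂ‖) ^ 2 :=
          pow_le_pow_left₀ (sq_nonneg _) h1 2
      _ ≤ (∑ j ∈ s, ‖c j‖ ^ 2) * ∑ j ∈ s, ‖⟪v, g j⟫_ℂ‖ ^ 2 := hCS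
      _ ≤ (∑ j ∈ s, ‖c j‖ ^ 2) * (B' * ‖v‖ ^ 2) := mul_le_mul_of_nonneg_left h2 hc
  nlinarith [key, sq_nonneg ‖v‖, mul_nonneg hB'nn hc]

lemma exists_synthesis (g : ℕ → H) (B' : ℝ) (hB'nn : 0 ≤ B')
    (hsum : ∀ x : H, Summable fun j => ‖⟪x, g j⟫_ℂ‖ ^ 2)
    (hup : ∀ x : H, ∑' j, ‖⟪x, g j⟫_ℂ‖ ^ 2 ≤ B' * ‖x‖ ^ 2) :
    ∃ U : ℓ² →L[ℂ] H, ∀ c : ℓ², HasSum (fun j => c j • g j) (U c) := by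
  have hSummable : ∀ c : ℓ², Summable fun j => c j • g j := by
    intro c
    rw [summable_iff_vanishing_norm]
    intro ε hε
    have hsq : Summable fun k => ‖c k‖ ^ 2 := lp2_summable_sq c
    have hvan := summable_iff_vanishing_norm.1 hsq (ε ^ 2 / (B' + 1)) (by positivity)
    obtain ⟨s, hs⟩ := hvan
    refine ⟨s, fun t ht => ?_⟩
    have h1 : ‖∑ j ∈ t, c j • g j‖ ^ 2 ≤ B' * ∑ j ∈ t, ‖c j‖ ^ 2 :=
      bessel_finsum g B' hB'nn hsum hup t c
    have h2 := hs t ht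
    rw [Real.norm_eq_abs, abs_of_nonneg (Finset.sum_nonneg fun j _ => sq_nonneg _)] at h2
    have h3 : B' * ∑ j ∈ t, ‖c j‖ ^ 2 < ε ^ 2 := by
      have hc : (0:ℝ) ≤ ∑ j ∈ t, ‖c j‖ ^ 2 := Finset.sum_nonneg fun j _ => sq_nonneg _
      calc B' * ∑ j ∈ t, ‖c j‖ ^ 2 ≤ (B' + 1) * ∑ j ∈ t, ‖c j‖ ^ 2 := by nlinarith
        _ < (B' + 1) * (ε ^ 2 / (B' + 1)) := by
            apply mul_lt_mul_of_pos_left h2 (by linarith)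
        _ = ε ^ 2 := by field_simp
    nlinarith [norm_nonneg (∑ j ∈ t, c j • g j)]
  -- the linear map
  have hadd : ∀ c d : ℓ², (∑' j, ((c + d) j • g j)) = (∑' j, c j • g j) + ∑' j, d j • g j := by
    intro c d
    have h1 := (hSummable c).hasSum
    have h2 := (hSummable d).hasSum
    have h3 : HasSum (fun j => (c + d) j • g j) ((∑' j, c j • g j) + ∑' j, d j • g j) := by
      have := h1.add h2
      convert this using 2 with j
      rw [lp.coeFn_add]
      simp [add_smul]
    exact h3.tsum_eq
  have hsmul : ∀ (r : ℂ) (c : ℓ²), (∑' j, ((r • c) j • g j)) = r • ∑' j, c j • g j := by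
    intro r c
    have h3 : HasSum (fun j => (r • c) j • g j) (r • ∑' j, c j • g j) := by
      have := (hSummable c).hasSum.const_smul r
      convert this using 2 with j
      rw [lp.coeFn_smul]
      simp [smul_smul]
    exact h3.tsum_eq
  let L : ℓ² →ₗ[ℂ] H :=
    { toFun := fun c => ∑' j, c j • g j
      map_add' := hadd
      map_smul' := hsmul }
  have hbound : ∀ c : ℓ², ‖L c‖ ≤ Real.sqrt B' * ‖c‖ := by
    intro c
    have hHS := (hSummable c).hasSum
    have htend : Filter.Tendsto (fun s : Finset ℕ => ‖∑ j ∈ s, c j • g j‖)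
        Filter.atTop (nhds ‖L c‖) := (continuous_norm.continuousAt.tendsto.comp hHS)
    refine le_of_tendsto htend (Filter.Eventually.of_forall fun s => ?_)
    have h1 := bessel_finsum g B' hB'nn hsum hup s c
    have h2 : ∑ j ∈ s, ‖c j‖ ^ 2 ≤ ‖c‖ ^ 2 := by
      rw [lp2_norm_sq]
      exact Summable.sum_le_tsum s (fun j _ => sq_nonneg _) (lp2_summable_sq c)
    have h3 : ‖∑ j ∈ s, c j • g j‖ ^ 2 ≤ (Real.sqrt B' * ‖c‖) ^ 2 := by
      rw [mul_pow, Real.sq_sqrt hB'nn]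
      exact le_trans h1 (mul_le_mul_of_nonneg_left h2 hB'nn)
    nlinarith [norm_nonneg (∑ j ∈ s, c j • g j), Real.sqrt_nonneg B', norm_nonneg c,
      mul_nonneg (Real.sqrt_nonneg B') (norm_nonneg c)]
  refine ⟨L.mkContinuous (Real.sqrt B') hbound, fun c => ?_⟩
  exact (hSummable c).hasSum

/-- Dual-frame expansion: every vector is an ℓ²-combination of the frame. -/
lemma exists_expansion (f : ℕ → H) (A B : ℝ) (hA : 0 < A) (hAB : A ≤ B)
    (hsum : ∀ x : H, Summable fun j => ‖⟪x, f j⟫_ℂ‖ ^ 2)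
    (hlow : ∀ x : H, A * ‖x‖ ^ 2 ≤ ∑' j, ‖⟪x, f j⟫_ℂ‖ ^ 2)
    (hup : ∀ x : H, ∑' j, ‖⟪x, f j⟫_ℂ‖ ^ 2 ≤ B * ‖x‖ ^ 2) :
    ∀ y : H, ∃ c : ℕ → ℂ, Summable (fun j => ‖c j‖ ^ 2) ∧
      HasSum (fun j => c j • f j) y := by
  have hBnn : 0 ≤ B := le_trans hA.le hAB
  obtain ⟨U, hU⟩ := exists_synthesis f B hBnn hsum hup
  -- analysis operator
  have hmemT : ∀ x : H, Memℓp (fun j => ⟪f j, x⟫_ℂ) 2 := by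
    intro x
    apply mem_lp2
    convert hsum x using 2 with j
    rw [← norm_inner_symm]
  let T : H →ₗ[ℂ] ℓ² :=
    { toFun := fun x => ⟨fun j => ⟪f j, x⟫_ℂ, hmemT x⟩
      map_add' := by
        intro x y; ext j
        simp only [lp.coeFn_add, Pi.add_apply]
        exact inner_add_right _ _ _
      map_smul' := by
        intro r x; ext j
        simp only [lp.coeFn_smul, Pi.smul_apply]
        exact inner_smul_right _ _ _ }
  have hTapply : ∀ (x : H) (j : ℕ), (T x) j = ⟪f j, x⟫_ℂ := fun x j => rfl
  have hTnorm : ∀ x : H, ‖T x‖ ≤ Real.sqrt B * ‖x‖ := by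
    intro x
    have h1 : ‖T x‖ ^ 2 = ∑' j, ‖⟪f j, x⟫_ℂ‖ ^ 2 := lp2_norm_sq (T x)
    have h2 : (∑' j, ‖⟪f j, x⟫_ℂ‖ ^ 2) = ∑' j, ‖⟪x, f j⟫_ℂ‖ ^ 2 := by
      refine tsum_congr fun j => ?_
      rw [← norm_inner_symm]
    have h3 : ‖T x‖ ^ 2 ≤ (Real.sqrt B * ‖x‖) ^ 2 := by
      rw [h1, h2, mul_pow, Real.sq_sqrt hBnn]
      exact hup x
    nlinarith [norm_nonneg (T x), mul_nonneg (Real.sqrt_nonneg B) (norm_nonneg x)]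
  let Tc : H →L[ℂ] ℓ² := T.mkContinuous (Real.sqrt B) hTnorm
  let S : H →L[ℂ] H := U.comp Tc
  -- key: HasSum representation of S x and coercivity
  have hShs : ∀ x : H, HasSum (fun j => ⟪f j, x⟫_ℂ • f j) (S x) := fun x => hU (Tc x)
  have hcoer : ∀ x : H, A * ‖x‖ ^ 2 ≤ Complex.re ⟪x, S x⟫_ℂ := by
    intro x
    have h1 : HasSum (fun j => ⟪x, ⟪f j, x⟫_ℂ • f j⟫_ℂ) ⟪x, S x⟫_ℂ :=
      (innerSL ℂ x).hasSum (hShs x)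
    have h2 : HasSum (fun j => Complex.re ⟪x, ⟪f j, x⟫_ℂ • f j⟫_ℂ)
        (Complex.re ⟪x, S x⟫_ℂ) := (Complex.reCLM.hasSum h1)
    have h3 : (fun j => Complex.re ⟪x, ⟪f j, x⟫_ℂ • f j⟫_ℂ) =
        fun j => ‖⟪x, f j⟫_ℂ‖ ^ 2 := by
      funext j
      rw [inner_smul_right]
      rw [← inner_conj_symm x (f j)]
      rw [RCLike.mul_conj, RCLike.norm_conj]
      norm_cast
    rw [h3] at h2
    rw [← h2.tsum_eq]
    exact hlow x
  -- S is bounded below, hence has closed range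
  have hbelow : ∀ x : H, ‖x‖ ≤ A⁻¹ * ‖S x‖ := by
    intro x
    rcases eq_or_ne x 0 with rfl | hx
    · simp
    · have h1 : A * ‖x‖ ^ 2 ≤ Complex.re ⟪x, S x⟫_ℂ := hcoer x
      have h2 : Complex.re ⟪x, S x⟫_ℂ ≤ ‖⟪x, S x⟫_ℂ‖ := Complex.abs_re_le_norm _ |>.trans' (le_abs_self _)
      have h3 : ‖⟪x, S x⟫_ℂ‖ ≤ ‖x‖ * ‖S x‖ := norm_inner_le_norm _ _
      have hxpos : 0 < ‖x‖ := norm_pos_iff.2 hx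
      rw [inv_mul_eq_div, le_div_iff₀ hA]
      nlinarith
  have hanti : AntilipschitzWith (⟨A⁻¹, inv_nonneg.2 hA.le⟩ : NNReal) S :=
    ContinuousLinearMap.antilipschitz_of_bound S hbelow
  have hclosed : IsClosed (LinearMap.range (S : H →ₗ[ℂ] H) : Set H) := by
    rw [← ContinuousLinearMap.closed_range_of_antilipschitz hanti]
    exact (LinearMap.range (S : H →ₗ[ℂ] H)).isClosed_topologicalClosure
  -- S has dense range
  haveI : CompleteSpace (LinearMap.range (S : H →ₗ[ℂ] H)) := hclosed.completeSpace_coe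
  have hrange : LinearMap.range (S : H →ₗ[ℂ] H) = ⊤ := by
    rw [← Submodule.orthogonal_eq_bot_iff (K := LinearMap.range (S : H →ₗ[ℂ] H))]
    rw [Submodule.eq_bot_iff]
    intro x hx
    have h0 : ⟪S x, x⟫_ℂ = 0 :=
      (Submodule.mem_orthogonal _ _).1 hx (S x) (LinearMap.mem_range_self _ x)
    have h1 : A * ‖x‖ ^ 2 ≤ Complex.re ⟪x, S x⟫_ℂ := hcoer x
    have h2 : ⟪x, S x⟫_ℂ = 0 := by
      rw [← inner_conj_symm x (S x), h0, map_zero]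
    rw [h2] at h1
    simp only [Complex.zero_re] at h1
    have : ‖x‖ ^ 2 ≤ 0 := by nlinarith
    have : ‖x‖ = 0 := by nlinarith [sq_nonneg ‖x‖, norm_nonneg x]
    exact norm_eq_zero.1 this
  -- conclude
  intro y
  have hy : y ∈ LinearMap.range (S : H →ₗ[ℂ] H) := hrange ▸ Submodule.mem_top
  obtain ⟨z, hz⟩ := hy
  refine ⟨fun j => ⟪f j, z⟫_ℂ, ?_, ?_⟩
  · convert hsum z using 2 with j
    rw [← norm_inner_symm]
  · rw [← hz]
    exact hShs z

lemma side_lower (f : ℕ → H) (A B : ℝ) (hA : 0 < A) (hAB : A ≤ B)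
    (hframe : ∀ x : H, A * ‖x‖ ^ 2 ≤ ∑' j, ‖⟪x, f j⟫_ℂ‖ ^ 2 ∧
      ∑' j, ‖⟪x, f j⟫_ℂ‖ ^ 2 ≤ B * ‖x‖ ^ 2)
    (e e' : ℕ → ℕ) (he : Injective e) (he' : Injective e')
    (hcover : Set.range e ∪ Set.range e' = Set.univ)
    (hfin : FiniteDimensional ℂ
      ↥((Submodule.span ℂ (Set.range (f ∘ e))).topologicalClosure ⊓
        (Submodule.span ℂ (Set.range (f ∘ e'))).topologicalClosure)) :
    ∃ A₁ : ℝ, 0 < A₁ ∧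
      ∀ x ∈ (Submodule.span ℂ (Set.range (f ∘ e))).topologicalClosure,
        A₁ * ‖x‖ ^ 2 ≤ ∑' k, ‖⟪x, f (e k)⟫_ℂ‖ ^ 2 := by
  classical
  have hBnn : 0 ≤ B := le_trans hA.le hAB
  have hsum : ∀ x : H, Summable fun j => ‖⟪x, f j⟫_ℂ‖ ^ 2 := by
    intro x
    by_contra hns
    have h0 : (∑' j, ‖⟪x, f j⟫_ℂ‖ ^ 2) = 0 := tsum_eq_zero_of_not_summable hns
    have h1 := (hframe x).1
    rw [h0] at h1
    have hx : x = 0 := by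
      by_contra hx0
      have hpos : 0 < ‖x‖ := norm_pos_iff.2 hx0
      nlinarith [mul_pos hA (mul_pos hpos hpos)]
    subst hx
    apply hns
    convert summable_zero with j
    simp
  have hlow := fun x => (hframe x).1
  have hup := fun x => (hframe x).2
  set M := (Submodule.span ℂ (Set.range (f ∘ e))).topologicalClosure with hM
  set N := (Submodule.span ℂ (Set.range (f ∘ e'))).topologicalClosure with hN
  have hMclosed : IsClosed (M : Set H) := Submodule.isClosed_topologicalClosure _
  have hNclosed : IsClosed (N : Set H) := Submodule.isClosed_topologicalClosure _
  haveI : CompleteSpace M := hMclosed.completeSpace_coe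
  have hsube : ∀ x : H, Summable fun k => ‖⟪x, f (e k)⟫_ℂ‖ ^ 2 := fun x =>
    ((hsum x).comp_injective he)
  have hupe : ∀ x : H, (∑' k, ‖⟪x, (f ∘ e) k⟫_ℂ‖ ^ 2) ≤ B * ‖x‖ ^ 2 := by
    intro x
    refine le_trans (Summable.tsum_le_tsum_of_inj e he (fun j _ => sq_nonneg _)
      (fun k => le_rfl) (hsube x) (hsum x)) (hup x)
  obtain ⟨U, hU⟩ := exists_synthesis (f ∘ e) B hBnn (fun x => hsube x) hupe
  have hUmem : ∀ c : ℓ², U c ∈ M := by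
    intro c
    refine hMclosed.mem_of_tendsto (hU c) (Filter.Eventually.of_forall fun s => ?_)
    exact Submodule.sum_mem _ fun j _ => Submodule.smul_mem _ _
      (Submodule.le_topologicalClosure _ (Submodule.subset_span ⟨j, rfl⟩))
  set Uh : ℓ² →L[ℂ] M := U.codRestrict M hUmem with hUh
  have hUhcoe : ∀ c : ℓ², ((Uh c : M) : H) = U c := fun c => rfl
  -- density of the range of Uh
  have hdense : Dense (LinearMap.range (Uh : ℓ² →ₗ[ℂ] M) : Set M) := by
    rw [dense_iff_closure_eq, Set.eq_univ_iff_forall]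
    intro y
    rw [closure_subtype]
    have himg : ((↑) '' (LinearMap.range (Uh : ℓ² →ₗ[ℂ] M) : Set M) : Set H) = (LinearMap.range (U : ℓ² →ₗ[ℂ] H) : Set H) := by
      ext z
      constructor
      · rintro ⟨w, ⟨c, rfl⟩, rfl⟩; exact ⟨c, rfl⟩
      · rintro ⟨c, rfl⟩; exact ⟨Uh c, ⟨c, rfl⟩, rfl⟩
    rw [himg]
    have hspanle : Submodule.span ℂ (Set.range (f ∘ e)) ≤ LinearMap.range (U : ℓ² →ₗ[ℂ] H) := by
      rw [Submodule.span_le]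
      rintro _ ⟨k, rfl⟩
      refine ⟨lp.single 2 k (1 : ℂ), ?_⟩
      have h2 : ∀ j, ((lp.single 2 k (1 : ℂ)) : ℕ → ℂ) j • (f ∘ e) j
          = if j = k then (f ∘ e) k else 0 := by
        intro j
        by_cases hj : j = k
        · subst hj; rw [lp.single_apply_self]; simp
        · rw [lp.single_apply_ne _ _ _ hj]; simp [hj]
      have h1 : HasSum (fun j => ((lp.single 2 k (1 : ℂ)) : ℕ → ℂ) j • (f ∘ e) j)
          ((f ∘ e) k) := by
        rw [show (fun j => ((lp.single 2 k (1 : ℂ)) : ℕ → ℂ) j • (f ∘ e) j)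
          = fun j => if j = k then (f ∘ e) k else 0 from funext h2]
        exact hasSum_ite_eq k _
      exact ((hU _).unique h1)
    have hy : (y : H) ∈ closure (Submodule.span ℂ (Set.range (f ∘ e)) : Set H) := by
      have h := y.2
      have hcoe := Submodule.topologicalClosure_coe (Submodule.span ℂ (Set.range (f ∘ e)))
      have : (M : Set H) = closure (Submodule.span ℂ (Set.range (f ∘ e)) : Set H) := hcoe
      exact this ▸ h
    exact closure_mono hspanle hy
  -- the finite-dimensional exceptional subspace
  set V₀ : Submodule ℂ M := (M ⊓ N).comap M.subtype with hV₀
  haveI : FiniteDimensional ℂ V₀ := by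
    have equivV := Submodule.comapSubtypeEquivOfLe (inf_le_left : M ⊓ N ≤ M)
    exact Module.Finite.equiv equivV.symm
  -- every element of M splits
  have hsup : LinearMap.range (Uh : ℓ² →ₗ[ℂ] M) ⊔ V₀ = ⊤ := by
    rw [← top_le_iff]
    rintro y -
    obtain ⟨c, hcsum, hcHS⟩ := exists_expansion f A B hA hAB hsum hlow hup (y : H)
    set c₁ : ℕ → ℂ := fun j => if j ∈ Set.range e then c j else 0 with hc₁
    set c₂ : ℕ → ℂ := fun j => if j ∈ Set.range e then 0 else c j with hc₂
    have hc₁pos : ∀ j, j ∈ Set.range e → c₁ j = c j := by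
      intro j hj; simp only [hc₁]; exact if_pos hj
    have hc₁neg : ∀ j, j ∉ Set.range e → c₁ j = 0 := by
      intro j hj; simp only [hc₁]; exact if_neg hj
    have hc₂pos : ∀ j, j ∈ Set.range e → c₂ j = 0 := by
      intro j hj; simp only [hc₂]; exact if_pos hj
    have hc₂neg : ∀ j, j ∉ Set.range e → c₂ j = c j := by
      intro j hj; simp only [hc₂]; exact if_neg hj
    have hc₁sum : Summable fun j => ‖c₁ j‖ ^ 2 := by
      refine Summable.of_nonneg_of_le (fun j => sq_nonneg _) (fun j => ?_) hcsum
      by_cases hj : j ∈ Set.range e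
      · rw [hc₁pos j hj]
      · rw [hc₁neg j hj]; simpa using sq_nonneg ‖c j‖
    have hc₂sum : Summable fun j => ‖c₂ j‖ ^ 2 := by
      refine Summable.of_nonneg_of_le (fun j => sq_nonneg _) (fun j => ?_) hcsum
      by_cases hj : j ∈ Set.range e
      · rw [hc₂pos j hj]; simpa using sq_nonneg ‖c j‖
      · rw [hc₂neg j hj]
    obtain ⟨Uf, hUf⟩ := exists_synthesis f B hBnn hsum hup
    set ch1 : ℓ² := ⟨c₁, mem_lp2 hc₁sum⟩ with hch1
    set ch2 : ℓ² := ⟨c₂, mem_lp2 hc₂sum⟩ with hch2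
    have h₁ : HasSum (fun j => c₁ j • f j) (Uf ch1) := hUf ch1
    have h₂ : HasSum (fun j => c₂ j • f j) (Uf ch2) := hUf ch2
    have hcc : ∀ j, c₁ j • f j + c₂ j • f j = c j • f j := by
      intro j
      by_cases hj : j ∈ Set.range e
      · rw [hc₁pos j hj, hc₂pos j hj, zero_smul, add_zero]
      · rw [hc₁neg j hj, hc₂neg j hj, zero_smul, zero_add]
    have hsum12 : HasSum (fun j => c j • f j) (Uf ch1 + Uf ch2) := by
      have hadd := h₁.add h₂
      simpa only [hcc] using hadd
    have hy_eq : (y : H) = Uf ch1 + Uf ch2 := hcHS.unique hsum12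
    -- first piece is in the range of Uh
    set a : ℕ → ℂ := fun k => c (e k) with ha
    have hasum : Summable fun k => ‖a k‖ ^ 2 := hcsum.comp_injective he
    set ah : ℓ² := ⟨a, mem_lp2 hasum⟩ with hah
    have hUah : U ah = Uf ch1 := by
      have hzero : ∀ j ∉ Set.range e, c₁ j • f j = 0 := by
        intro j hj
        rw [hc₁neg j hj, zero_smul]
      have hHS1 : HasSum ((fun j => c₁ j • f j) ∘ e) (Uf ch1) := (he.hasSum_iff hzero).2 h₁
      have hfun : ((fun j => c₁ j • f j) ∘ e) = fun k => a k • (f ∘ e) k := by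
        funext k
        simp only [Function.comp_apply]
        rw [hc₁pos _ (Set.mem_range_self k)]
      have hHS2 : HasSum (fun k => a k • (f ∘ e) k) (Uf ch1) := hfun ▸ hHS1
      exact (hU ah).unique hHS2
    -- second piece is in N
    have hy₂N : Uf ch2 ∈ N := by
      refine hNclosed.mem_of_tendsto h₂ (Filter.Eventually.of_forall fun s => ?_)
      refine Submodule.sum_mem _ fun j _ => ?_
      by_cases hj : j ∈ Set.range e
      · rw [hc₂pos j hj, zero_smul]
        exact Submodule.zero_mem _
      · have hj' : j ∈ Set.range e' := by
          have hun : j ∈ Set.range e ∪ Set.range e' := hcover ▸ Set.mem_univ j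
          rcases (Set.mem_union _ _ _).1 hun with h | h
          · exact absurd h hj
          · exact h
        obtain ⟨k, rfl⟩ := hj'
        exact Submodule.smul_mem _ _
          (Submodule.le_topologicalClosure _ (Submodule.subset_span ⟨k, rfl⟩))
    have hy₂M : Uf ch2 ∈ M := by
      have h1 : Uf ch2 = (y : H) - Uf ch1 := by rw [hy_eq]; abel
      rw [h1, ← hUah]
      exact Submodule.sub_mem _ y.2 (hUmem ah)
    refine Submodule.mem_sup.2 ⟨Uh ah, ⟨ah, rfl⟩, ⟨Uf ch2, hy₂M⟩, ⟨hy₂M, hy₂N⟩, ?_⟩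
    apply Subtype.ext
    show ((Uh ah : M) : H) + Uf ch2 = (y : H)
    rw [hUhcoe, hUah]
    exact hy_eq.symm
  have hrangetop : LinearMap.range (Uh : ℓ² →ₗ[ℂ] M) = ⊤ :=
    range_eq_top_of_dense_of_fincodim Uh V₀ hdense hsup
  have hsurj : Function.Surjective Uh := LinearMap.range_eq_top.1 hrangetop
  obtain ⟨C, hCpos, hC⟩ := Uh.exists_preimage_norm_le hsurj
  refine ⟨(C ^ 2)⁻¹, by positivity, ?_⟩
  intro x hx
  rcases eq_or_ne x 0 with rfl | hx0
  · simpa using tsum_nonneg (fun k => sq_nonneg ‖⟪(0:H), f (e k)⟫_ℂ‖)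
  obtain ⟨c, hc_eq, hc_norm⟩ := hC ⟨x, hx⟩
  have hxU : HasSum (fun k => c k • f (e k)) x := by
    have hHS := hU c
    have hcoe : U c = x := by
      rw [← hUhcoe c, hc_eq]
    rwa [hcoe] at hHS
  have hinner : HasSum (fun k => c k * ⟪x, f (e k)⟫_ℂ) ⟪x, x⟫_ℂ := by
    have hHS := (innerSL ℂ x).hasSum hxU
    simpa only [innerSL_apply_apply, inner_smul_right] using hHS
  have hCS := tsum_CS (a := fun k => ‖c k‖) (b := fun k => ‖⟪x, f (e k)⟫_ℂ‖)
    (fun k => norm_nonneg _) (fun k => norm_nonneg _) (lp2_summable_sq c) (hsube x)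
  have h1 : ‖x‖ ^ 2 = ‖⟪x, x⟫_ℂ‖ := by
    rw [inner_self_eq_norm_sq_to_K (𝕜 := ℂ)]
    rw [norm_pow]
    simp
  have h2 : ‖⟪x, x⟫_ℂ‖ ≤ ∑' k, ‖c k‖ * ‖⟪x, f (e k)⟫_ℂ‖ := by
    rw [← hinner.tsum_eq]
    refine le_trans (norm_tsum_le_tsum_norm ?_) ?_
    · convert hCS.1 using 2 with k
      rw [norm_mul]
    · refine le_of_eq (tsum_congr fun k => ?_)
      rw [norm_mul]
  have h3 := hCS.2
  have h4 : (∑' k, ‖c k‖ ^ 2) ≤ C ^ 2 * ‖x‖ ^ 2 := by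
    rw [← lp2_norm_sq c]
    have hyx : ‖(⟨x, hx⟩ : M)‖ = ‖x‖ := rfl
    rw [hyx] at hc_norm
    nlinarith [norm_nonneg c, norm_nonneg x, hCpos.le]
  -- combine
  set Sm := ∑' k, ‖⟪x, f (e k)⟫_ℂ‖ ^ 2 with hSm
  have hSmnn : 0 ≤ Sm := tsum_nonneg fun k => sq_nonneg _
  have h5 : ‖x‖ ^ 2 ≤ Real.sqrt (C ^ 2 * ‖x‖ ^ 2) * Real.sqrt Sm := by
    calc ‖x‖ ^ 2 = ‖⟪x, x⟫_ℂ‖ := h1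
      _ ≤ ∑' k, ‖c k‖ * ‖⟪x, f (e k)⟫_ℂ‖ := h2
      _ ≤ Real.sqrt (∑' k, ‖c k‖ ^ 2) * Real.sqrt Sm := h3
      _ ≤ Real.sqrt (C ^ 2 * ‖x‖ ^ 2) * Real.sqrt Sm := by
          exact mul_le_mul_of_nonneg_right (Real.sqrt_le_sqrt h4) (Real.sqrt_nonneg _)
  have h6 : Real.sqrt (C ^ 2 * ‖x‖ ^ 2) = C * ‖x‖ := by
    rw [Real.sqrt_mul (by positivity), Real.sqrt_sq hCpos.le, Real.sqrt_sq (norm_nonneg x)]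
  rw [h6] at h5
  have hxpos : 0 < ‖x‖ := norm_pos_iff.2 hx0
  have h7 : ‖x‖ ≤ C * Real.sqrt Sm := by
    nlinarith [Real.sqrt_nonneg Sm, hCpos]
  have h8 : ‖x‖ ^ 2 ≤ C ^ 2 * Sm := by
    have hb : (0:ℝ) ≤ C * Real.sqrt Sm := by positivity
    have hmul := mul_le_mul h7 h7 (norm_nonneg x) hb
    nlinarith [Real.sq_sqrt hSmnn]
  calc (C ^ 2)⁻¹ * ‖x‖ ^ 2 ≤ (C ^ 2)⁻¹ * (C ^ 2 * Sm) :=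
        mul_le_mul_of_nonneg_left h8 (by positivity)
    _ = Sm := by field_simp

end FrameAux

/-- Let `(f_n)` be a frame for a complex Hilbert space `H` and let `(m_k)`,
`(n_k)` be strictly increasing sequences whose ranges cover `ℕ`. If the
intersection of the closed linear spans of `(f_{m_k})` and `(f_{n_k})` is
finite-dimensional, then both subfamilies are frame sequences, i.e. frames for
the closures of their own linear spans. -/
theorem subfamilies_frame_sequences
    {H : Type*} [NormedAddCommGroup H] [InnerProductSpace ℂ H] [CompleteSpace H]
    (f : ℕ → H) (A B : ℝ) (hA : 0 < A) (hAB : A ≤ B)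
    (hframe : ∀ x : H, A * ‖x‖ ^ 2 ≤ ∑' j, ‖⟪x, f j⟫_ℂ‖ ^ 2 ∧
      ∑' j, ‖⟪x, f j⟫_ℂ‖ ^ 2 ≤ B * ‖x‖ ^ 2)
    (m n : ℕ → ℕ) (hm : StrictMono m) (hn : StrictMono n)
    (hcover : Set.range m ∪ Set.range n = Set.univ)
    (hfin : FiniteDimensional ℂ
      ↥((Submodule.span ℂ (Set.range (f ∘ m))).topologicalClosure ⊓
        (Submodule.span ℂ (Set.range (f ∘ n))).topologicalClosure)) :
    (∃ A₁ B₁ : ℝ, 0 < A₁ ∧ A₁ ≤ B₁ ∧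
      ∀ x ∈ (Submodule.span ℂ (Set.range (f ∘ m))).topologicalClosure,
        A₁ * ‖x‖ ^ 2 ≤ ∑' k, ‖⟪x, f (m k)⟫_ℂ‖ ^ 2 ∧
        ∑' k, ‖⟪x, f (m k)⟫_ℂ‖ ^ 2 ≤ B₁ * ‖x‖ ^ 2) ∧
    (∃ A₂ B₂ : ℝ, 0 < A₂ ∧ A₂ ≤ B₂ ∧
      ∀ x ∈ (Submodule.span ℂ (Set.range (f ∘ n))).topologicalClosure,
        A₂ * ‖x‖ ^ 2 ≤ ∑' k, ‖⟪x, f (n k)⟫_ℂ‖ ^ 2 ∧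
        ∑' k, ‖⟪x, f (n k)⟫_ℂ‖ ^ 2 ≤ B₂ * ‖x‖ ^ 2) := by
  have hsum : ∀ x : H, Summable fun j => ‖⟪x, f j⟫_ℂ‖ ^ 2 := by
    intro x
    by_contra hns
    have h0 : (∑' j, ‖⟪x, f j⟫_ℂ‖ ^ 2) = 0 := tsum_eq_zero_of_not_summable hns
    have h1 := (hframe x).1
    rw [h0] at h1
    have hx : x = 0 := by
      by_contra hx0
      have hpos : 0 < ‖x‖ := norm_pos_iff.2 hx0
      nlinarith [mul_pos hA (mul_pos hpos hpos)]
    subst hx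
    apply hns
    convert summable_zero with j
    simp
  have hup := fun x => (hframe x).2
  obtain ⟨A₁, hA₁, h₁⟩ := side_lower f A B hA hAB hframe m n
    hm.injective hn.injective hcover hfin
  have hcover' : Set.range n ∪ Set.range m = Set.univ := by
    rw [Set.union_comm]; exact hcover
  have hfin' : FiniteDimensional ℂ
      ↥((Submodule.span ℂ (Set.range (f ∘ n))).topologicalClosure ⊓
        (Submodule.span ℂ (Set.range (f ∘ m))).topologicalClosure) := by
    rwa [inf_comm] at hfin
  obtain ⟨A₂, hA₂, h₂⟩ := side_lower f A B hA hAB hframe n m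
    hn.injective hm.injective hcover' hfin'
  have hupm : ∀ x : H, (∑' k, ‖⟪x, f (m k)⟫_ℂ‖ ^ 2) ≤ B * ‖x‖ ^ 2 := fun x =>
    le_trans (Summable.tsum_le_tsum_of_inj m hm.injective (fun j _ => sq_nonneg _)
      (fun k => le_rfl) ((hsum x).comp_injective hm.injective) (hsum x)) (hup x)
  have hupn : ∀ x : H, (∑' k, ‖⟪x, f (n k)⟫_ℂ‖ ^ 2) ≤ B * ‖x‖ ^ 2 := fun x =>
    le_trans (Summable.tsum_le_tsum_of_inj n hn.injective (fun j _ => sq_nonneg _)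
      (fun k => le_rfl) ((hsum x).comp_injective hn.injective) (hsum x)) (hup x)
  constructor
  · refine ⟨A₁, max A₁ B, hA₁, le_max_left _ _, fun x hx => ⟨h₁ x hx, ?_⟩⟩
    exact le_trans (hupm x)
      (mul_le_mul_of_nonneg_right (le_max_right _ _) (sq_nonneg _))
  · refine ⟨A₂, max A₂ B, hA₂, le_max_left _ _, fun x hx => ⟨h₂ x hx, ?_⟩⟩
    exact le_trans (hupn x)
      (mul_le_mul_of_nonneg_right (le_max_right _ _) (sq_nonneg _))
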